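/- Let G ≤ Aut(S) be a finite subgroup of the group of graded automorphisms of the weighted polynomial ring S. Then there exists γ ∈ Aut(S) such that every element of γGγ⁻¹ does not mix variables of different weights: for every weight b and every variable x_i with a_i = b, each element of γGγ⁻¹ sends x_i into the linear span of the variables x_j with a_j = b. -/

import Mathlib

open MvPolynomial

noncomputable section

/-- The predicate that an algebra automorphism of `ℂ[x_0,…,x_{n+1}]` is graded with
respect to the weights `a`, i.e. preserves all weighted-homogeneous pieces. -/
def IsGradedAut {n : ℕ} (a : Fin (n + 2) → ℕ)
    (φ : MvPolynomial (Fin (n + 2)) ℂ ≃ₐ[ℂ] MvPolynomial (Fin (n + 2)) ℂ) : Prop :=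
  ∀ (d : ℕ) (f : MvPolynomial (Fin (n + 2)) ℂ),
    f.IsWeightedHomogeneous a d ↔ (φ f).IsWeightedHomogeneous a d

lemma IsGradedAut.one {n : ℕ} (a : Fin (n + 2) → ℕ) : IsGradedAut a 1 := by
  intro d f
  rfl

lemma IsGradedAut.mul {n : ℕ} {a : Fin (n + 2) → ℕ}
    {φ ψ : MvPolynomial (Fin (n + 2)) ℂ ≃ₐ[ℂ] MvPolynomial (Fin (n + 2)) ℂ}
    (hφ : IsGradedAut a φ) (hψ : IsGradedAut a ψ) : IsGradedAut a (φ * ψ) := by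
  intro d f
  rw [AlgEquiv.mul_apply]
  exact (hψ d f).trans (hφ d (ψ f))

lemma IsGradedAut.inv {n : ℕ} {a : Fin (n + 2) → ℕ}
    {φ : MvPolynomial (Fin (n + 2)) ℂ ≃ₐ[ℂ] MvPolynomial (Fin (n + 2)) ℂ}
    (hφ : IsGradedAut a φ) : IsGradedAut a φ⁻¹ := by
  intro d f
  have h := hφ d (φ⁻¹ f)
  rw [show φ (φ⁻¹ f) = f from φ.apply_symm_apply f] at h
  exact h.symm

/-- The group of graded automorphisms `Aut(S)`. -/
def gradedAut {n : ℕ} (a : Fin (n + 2) → ℕ) :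
    Subgroup (MvPolynomial (Fin (n + 2)) ℂ ≃ₐ[ℂ] MvPolynomial (Fin (n + 2)) ℂ) where
  carrier := {φ | IsGradedAut a φ}
  one_mem' := IsGradedAut.one a
  mul_mem' hφ hψ := hφ.mul hψ
  inv_mem' hφ := hφ.inv


namespace NoMixAux

variable {n : ℕ}

local notation "Rn" => MvPolynomial (Fin (n + 2)) ℂ

lemma deg_add (m m' : Fin (n + 2) →₀ ℕ) :
    (m + m').degree = m.degree + m'.degree := by
  simp [Finsupp.degree_eq_weight_one, map_add]

lemma deg_single (i : Fin (n + 2)) (k : ℕ) : (Finsupp.single i k).degree = k := by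
  simp [Finsupp.degree_eq_weight_one, Finsupp.weight_apply, Finsupp.sum_single_index]

lemma eq_single_of_deg_one {m : Fin (n + 2) →₀ ℕ} (h : m.degree = 1) :
    ∃ j, m = Finsupp.single j 1 := by
  have hm : m ≠ 0 := by
    rintro rfl
    simp [map_zero] at h
  obtain ⟨j, hj⟩ := Finsupp.ne_iff.mp hm
  simp only [Finsupp.coe_zero, Pi.zero_apply] at hj
  refine ⟨j, ?_⟩
  have h2 := h
  rw [← Finsupp.single_add_erase j m, deg_add, deg_single] at h2
  have hj1 : m j = 1 := by
    have : 1 ≤ m j := Nat.one_le_iff_ne_zero.mpr hj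
    omega
  have h3 : (m.erase j).degree = 0 := by omega
  have h4 : m.erase j = 0 := (Finsupp.degree_eq_zero_iff _).mp h3
  conv_lhs => rw [← Finsupp.single_add_erase j m]
  rw [h4, add_zero, hj1]

/-- All monomials of `p` have (standard) degree at least `k`. -/
def MinDeg (k : ℕ) (p : Rn) : Prop :=
  ∀ m : Fin (n + 2) →₀ ℕ, m.degree < k → MvPolynomial.coeff m p = 0

lemma MinDeg.mono {k l : ℕ} {p : Rn} (h : MinDeg l p) (hkl : k ≤ l) : MinDeg k p :=
  fun m hm => h m (lt_of_lt_of_le hm hkl)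

lemma minDeg_zero (k : ℕ) : MinDeg k (0 : Rn) := fun m _ => coeff_zero m

lemma minDeg_bot (p : Rn) : MinDeg 0 p := fun _ hm => absurd hm (Nat.not_lt_zero _)

lemma MinDeg.add {k : ℕ} {p q : Rn} (hp : MinDeg k p) (hq : MinDeg k q) :
    MinDeg k (p + q) := by
  intro m hm
  rw [coeff_add, hp m hm, hq m hm, add_zero]

lemma MinDeg.neg {k : ℕ} {p : Rn} (hp : MinDeg k p) : MinDeg k (-p) := by
  intro m hm
  rw [coeff_neg, hp m hm, neg_zero]

lemma MinDeg.smul {k : ℕ} {p : Rn} (hp : MinDeg k p) (c : ℂ) : MinDeg k (c • p) := by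
  intro m hm
  rw [MvPolynomial.coeff_smul, hp m hm, smul_zero]

lemma MinDeg.sum {ι : Type*} {s : Finset ι} {f : ι → Rn} {k : ℕ}
    (h : ∀ i ∈ s, MinDeg k (f i)) : MinDeg k (∑ i ∈ s, f i) := by
  intro m hm
  rw [MvPolynomial.coeff_sum]
  exact Finset.sum_eq_zero fun i hi => h i hi m hm

lemma MinDeg.mul {s t : ℕ} {p q : Rn} (hp : MinDeg s p) (hq : MinDeg t q) :
    MinDeg (s + t) (p * q) := by
  classical
  intro m hm
  by_contra hc
  have hmem : m ∈ (p * q).support := mem_support_iff.mpr hc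
  obtain ⟨m1, hm1, m2, hm2, hsum⟩ := Finset.mem_add.mp (support_mul p q hmem)
  have h1 : s ≤ m1.degree := by
    by_contra h
    exact (mem_support_iff.mp hm1) (hp m1 (by omega))
  have h2 : t ≤ m2.degree := by
    by_contra h
    exact (mem_support_iff.mp hm2) (hq m2 (by omega))
  rw [← hsum, deg_add] at hm
  omega

lemma MinDeg.pow {s : ℕ} {p : Rn} (hp : MinDeg s p) (k : ℕ) : MinDeg (k * s) (p ^ k) := by
  induction k with
  | zero => simpa using minDeg_bot _
  | succ k ih =>
    rw [pow_succ]
    have := ih.mul hp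
    have he : k * s + s = (k + 1) * s := by ring
    rwa [he] at this

lemma MinDeg.prod {ι : Type*} {s : Finset ι} {f : ι → ℕ} {g : ι → Rn}
    (h : ∀ i ∈ s, MinDeg (f i) (g i)) :
    MinDeg (∑ i ∈ s, f i) (∏ i ∈ s, g i) := by
  classical
  induction s using Finset.induction_on with
  | empty => simpa using minDeg_bot _
  | @insert j s' hj ih =>
    rw [Finset.sum_insert hj, Finset.prod_insert hj]
    exact (h j (Finset.mem_insert_self j s')).mul
      (ih fun i his => h i (Finset.mem_insert_of_mem his))

lemma minDeg_X (i : Fin (n + 2)) : MinDeg 1 (X i : Rn) := by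
  intro m hm
  have h0 : m.degree = 0 := by omega
  rw [(Finsupp.degree_eq_zero_iff _).mp h0]
  exact coeff_zero_X i

lemma minDeg_monomial (e : Fin (n + 2) →₀ ℕ) (c : ℂ) :
    MinDeg e.degree (monomial e c : Rn) := by
  intro m hm
  rw [coeff_monomial]
  rw [if_neg]
  rintro rfl
  omega

lemma minDeg_two {p : Rn} (h0 : coeff 0 p = 0)
    (h1 : ∀ j, coeff (Finsupp.single j 1) p = 0) : MinDeg 2 p := by
  intro m hm
  have : m.degree = 0 ∨ m.degree = 1 := by omega
  rcases this with h | h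
  · rw [(Finsupp.degree_eq_zero_iff _).mp h]; exact h0
  · obtain ⟨j, rfl⟩ := eq_single_of_deg_one h
    exact h1 j

lemma MinDeg.coeff_single_eq_zero {p : Rn} (h : MinDeg 2 p) (j : Fin (n + 2)) :
    coeff (Finsupp.single j 1) p = 0 :=
  h _ (by rw [deg_single]; omega)

variable (a : Fin (n + 2) → ℕ)

lemma weight_single_one (j : Fin (n + 2)) :
    Finsupp.weight a (Finsupp.single j 1) = a j := by
  simp [Finsupp.weight_apply, Finsupp.sum_single_index]

lemma deg_le_weight (ha : ∀ i, 0 < a i) (m : Fin (n + 2) →₀ ℕ) :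
    m.degree ≤ Finsupp.weight a m := by
  rw [Finsupp.degree, Finsupp.weight_apply, Finsupp.sum]
  apply Finset.sum_le_sum
  intro i _
  simpa [smul_eq_mul] using Nat.le_mul_of_pos_right (m i) (ha i)

lemma algHom_C (φ : Rn →ₐ[ℂ] Rn) (c : ℂ) : φ (C c) = C c := by
  rw [← MvPolynomial.algebraMap_eq]
  exact φ.commutes c

/-- An algebra endomorphism sending each variable to a weighted-homogeneous polynomial
of the same weight. -/
def IsGradedHom (φ : Rn →ₐ[ℂ] Rn) : Prop :=
  ∀ i, (φ (X i)).IsWeightedHomogeneous a (a i)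

variable {a}

lemma IsGradedHom.coeff_zero (ha : ∀ i, 0 < a i) {φ : Rn →ₐ[ℂ] Rn}
    (hφ : IsGradedHom a φ) (i : Fin (n + 2)) : coeff 0 (φ (X i)) = 0 := by
  by_contra h
  have h1 := hφ i h
  rw [map_zero] at h1
  exact absurd h1.symm (ha i).ne'

lemma IsGradedHom.map_isWH {φ : Rn →ₐ[ℂ] Rn} (hφ : IsGradedHom a φ) {d : ℕ} {p : Rn}
    (hp : p.IsWeightedHomogeneous a d) : (φ p).IsWeightedHomogeneous a d := by
  conv_lhs => rw [p.as_sum]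
  rw [map_sum]
  apply IsWeightedHomogeneous.sum
  intro m hm
  have hw : Finsupp.weight a m = d := hp (mem_support_iff.mp hm)
  rw [monomial_eq, map_mul, algHom_C]
  have h2 : (φ (m.prod fun i e => (X i : Rn) ^ e)).IsWeightedHomogeneous a
      (∑ i ∈ m.support, m i * a i) := by
    rw [Finsupp.prod, map_prod]
    apply IsWeightedHomogeneous.prod
    intro i _
    rw [map_pow]
    have : ∀ k : ℕ, ((φ (X i)) ^ k).IsWeightedHomogeneous a (k * a i) := by
      intro k
      induction k with
      | zero => simpa using isWeightedHomogeneous_one _ _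
      | succ k ih =>
        rw [pow_succ]
        have := ih.mul (hφ i)
        rwa [show k * a i + a i = (k + 1) * a i by ring] at this
    exact this (m i)
  have h3 : (∑ i ∈ m.support, m i * a i) = d := by
    rw [← hw, Finsupp.weight_apply, Finsupp.sum]
    simp [smul_eq_mul]
  rw [h3] at h2
  have := (isWeightedHomogeneous_C a (coeff m p)).mul h2
  rwa [zero_add] at this

lemma IsGradedHom.lin_eq_zero {φ : Rn →ₐ[ℂ] Rn} (hφ : IsGradedHom a φ)
    {i j : Fin (n + 2)} (hij : a j ≠ a i) :
    coeff (Finsupp.single j 1) (φ (X i)) = 0 := by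
  by_contra h
  have h1 := hφ i h
  rw [weight_single_one] at h1
  exact hij h1

lemma IsGradedHom.minDeg_one (ha : ∀ i, 0 < a i) {φ : Rn →ₐ[ℂ] Rn}
    (hφ : IsGradedHom a φ) (i : Fin (n + 2)) : MinDeg 1 (φ (X i)) := by
  intro m hm
  have h0 : m.degree = 0 := by omega
  rw [(Finsupp.degree_eq_zero_iff _).mp h0]
  exact hφ.coeff_zero ha i

lemma IsGradedHom.map_minDeg (ha : ∀ i, 0 < a i) {φ : Rn →ₐ[ℂ] Rn}
    (hφ : IsGradedHom a φ) {k : ℕ} {p : Rn} (hp : MinDeg k p) : MinDeg k (φ p) := by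
  conv_rhs => rw [p.as_sum]
  rw [map_sum]
  apply MinDeg.sum
  intro m hm
  have hk : k ≤ m.degree := by
    by_contra h
    exact (mem_support_iff.mp hm) (hp m (by omega))
  refine MinDeg.mono ?_ hk
  rw [monomial_eq, map_mul, algHom_C, Finsupp.prod, map_prod]
  have h2 : MinDeg (∑ i ∈ m.support, m i * 1) (∏ i ∈ m.support, φ ((X i : Rn) ^ m i)) := by
    apply MinDeg.prod
    intro i _
    rw [map_pow]
    exact (hφ.minDeg_one ha i).pow (m i)
  have h3 : (∑ i ∈ m.support, m i * 1) = m.degree := by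
    simp [Finsupp.degree_apply]
  rw [h3] at h2
  intro mm hmm
  rw [coeff_C_mul, h2 mm hmm, mul_zero]

/-- The linear-part remainder of a graded endomorphism has min-degree 2. -/
lemma IsGradedHom.minDeg_remainder (ha : ∀ i, 0 < a i) {φ : Rn →ₐ[ℂ] Rn}
    (hφ : IsGradedHom a φ) (i : Fin (n + 2)) :
    MinDeg 2 (φ (X i) - ∑ l, coeff (Finsupp.single l 1) (φ (X i)) • X l) := by
  apply minDeg_two
  · rw [coeff_sub, hφ.coeff_zero ha i, MvPolynomial.coeff_sum]
    simp [MvPolynomial.coeff_smul, coeff_zero_X]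
  · intro j
    rw [coeff_sub, MvPolynomial.coeff_sum]
    have : ∀ l, coeff (Finsupp.single j 1)
        ((coeff (Finsupp.single l 1) (φ (X i))) • (X l : Rn)) =
        if l = j then coeff (Finsupp.single l 1) (φ (X i)) else 0 := by
      intro l
      rw [MvPolynomial.coeff_smul, coeff_X']
      by_cases h : l = j
      · subst h; simp
      · rw [if_neg, if_neg h, smul_zero]
        rw [Finsupp.single_left_inj one_ne_zero]
        exact h
    rw [Finset.sum_congr rfl fun l _ => this l, Finset.sum_ite_eq' Finset.univ j]
    simp

/-- Key composition formula for the linear parts. -/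
lemma coeff_single_comp (ha : ∀ i, 0 < a i) {φ ψ : Rn →ₐ[ℂ] Rn}
    (hφ : IsGradedHom a φ) (hψ : IsGradedHom a ψ) (i j : Fin (n + 2)) :
    coeff (Finsupp.single j 1) (φ (ψ (X i))) =
      ∑ l, coeff (Finsupp.single l 1) (ψ (X i)) * coeff (Finsupp.single j 1) (φ (X l)) := by
  have hdec : ψ (X i) = (∑ l, coeff (Finsupp.single l 1) (ψ (X i)) • X l) +
      (ψ (X i) - ∑ l, coeff (Finsupp.single l 1) (ψ (X i)) • X l) := by ring
  conv_lhs => rw [hdec]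
  rw [map_add, map_sum, coeff_add, MvPolynomial.coeff_sum]
  have hr := (hφ.map_minDeg ha (hψ.minDeg_remainder ha i)).coeff_single_eq_zero j
  rw [hr, add_zero]
  apply Finset.sum_congr rfl
  intro l _
  rw [map_smul, MvPolynomial.coeff_smul, smul_eq_mul]


/-- Master lemma: a graded substitution which is `identity + higher order terms`
is bijective, and both it and its inverse preserve weighted-homogeneous pieces. -/
lemma aeval_bijective_graded (ha : ∀ i, 0 < a i) (c : Fin (n + 2) → Rn)
    (hWH : ∀ i, (c i).IsWeightedHomogeneous a (a i))
    (hMD : ∀ i, MinDeg 2 (c i - X i)) :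
    Function.Bijective (aeval c : Rn →ₐ[ℂ] Rn) ∧
      (∀ (d : ℕ) (f : Rn), f.IsWeightedHomogeneous a d ↔
        ((aeval c : Rn →ₐ[ℂ] Rn) f).IsWeightedHomogeneous a d) := by
  set φ : Rn →ₐ[ℂ] Rn := aeval c with hφdef
  have hφX : ∀ i, φ (X i) = c i := fun i => aeval_X c i
  have hφ : IsGradedHom a φ := fun i => by rw [hφX]; exact hWH i
  -- Step A: the shift lemma
  have hshift_mul : ∀ {s t : ℕ} {p q : Rn}, MinDeg s p → MinDeg (s + 1) (φ p - p) →
      MinDeg t q → MinDeg (t + 1) (φ q - q) → MinDeg (s + t + 1) (φ (p * q) - p * q) := by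
    intro s t p q hp hp' hq hq'
    have heq : φ (p * q) - p * q = (φ p - p) * φ q + p * (φ q - q) := by
      rw [map_mul]; ring
    rw [heq]
    have h1 : MinDeg t (φ q) := by
      have h2 := (hq'.mono (Nat.le_succ t)).add hq
      rwa [sub_add_cancel] at h2
    exact ((hp'.mul h1).mono (by omega)).add ((hp.mul hq').mono (by omega))
  have hshift_X : ∀ i, MinDeg 2 (φ (X i) - X i) := fun i => by rw [hφX]; exact hMD i
  have hshift_Xpow : ∀ (i : Fin (n + 2)) (k : ℕ),
      MinDeg (k + 1) (φ ((X i : Rn) ^ k) - (X i : Rn) ^ k) := by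
    intro i k
    induction k with
    | zero => simpa using minDeg_zero 1
    | succ k ih =>
      have hm := hshift_mul (by simpa using (minDeg_X i).pow k) ih (minDeg_X i) (hshift_X i)
      rw [← pow_succ] at hm
      exact hm.mono (by omega)
  have hshift_mon : ∀ (e : Fin (n + 2) →₀ ℕ) (cc : ℂ),
      MinDeg (e.degree + 1) (φ (monomial e cc) - monomial e cc) := by
    intro e
    induction e using Finsupp.induction with
    | zero =>
      intro cc
      rw [monomial_zero', algHom_C, sub_self]
      exact minDeg_zero _
    | single_add i k f hif hk ih =>
      intro cc
      rw [monomial_single_add]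
      have hm := hshift_mul (by simpa using (minDeg_X i).pow k) (hshift_Xpow i k)
        (minDeg_monomial f cc) (ih cc)
      have hdeg : (Finsupp.single i k + f).degree = k + f.degree := by
        rw [deg_add, deg_single]
      rw [hdeg]
      exact hm.mono (by omega)
  have hshift : ∀ {k : ℕ} {p : Rn}, MinDeg k p → MinDeg (k + 1) (φ p - p) := by
    intro k p hp
    have heq : φ p - p = ∑ m ∈ p.support,
        (φ (monomial m (coeff m p)) - monomial m (coeff m p)) := by
      rw [Finset.sum_sub_distrib, ← map_sum, ← p.as_sum]
    rw [heq]
    apply MinDeg.sum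
    intro m hm
    have hk : k ≤ m.degree := by
      by_contra h
      exact (mem_support_iff.mp hm) (hp m (by omega))
    exact (hshift_mon m _).mono (by omega)
  -- vanishing of homogeneous polynomials of high min-degree
  have hzero : ∀ {d : ℕ} {p : Rn}, p.IsWeightedHomogeneous a d → MinDeg (d + 1) p → p = 0 := by
    intro d p hp hmd
    rw [MvPolynomial.eq_zero_iff]
    intro m
    by_contra h
    have h1 : Finsupp.weight a m = d := hp h
    have h2 : m.degree ≤ d := h1 ▸ deg_le_weight a ha m
    exact h (hmd m (by omega))
  -- injectivity on homogeneous pieces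
  have hinjH : ∀ (d : ℕ) (p : Rn), p.IsWeightedHomogeneous a d → φ p = 0 → p = 0 := by
    intro d p hp h0
    have hmd : ∀ k, MinDeg k p := by
      intro k
      induction k with
      | zero => exact minDeg_bot p
      | succ k ih =>
        have h1 := hshift ih
        rw [h0, zero_sub] at h1
        intro m hm
        have h2 := h1 m hm
        rwa [coeff_neg, neg_eq_zero] at h2
    exact hzero hp (hmd (d + 1))
  -- surjectivity onto homogeneous pieces
  have hsurjH : ∀ (d : ℕ) (p : Rn), p.IsWeightedHomogeneous a d →
      ∃ f, f.IsWeightedHomogeneous a d ∧ φ f = p := by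
    intro d
    suffices h : ∀ (k : ℕ) (p : Rn), p.IsWeightedHomogeneous a d → MinDeg (d + 1 - k) p →
        ∃ f, f.IsWeightedHomogeneous a d ∧ φ f = p by
      intro p hp
      exact h (d + 1) p hp (by simpa using minDeg_bot p)
    intro k
    induction k with
    | zero =>
      intro p hp h0
      rw [Nat.sub_zero] at h0
      exact ⟨0, isWeightedHomogeneous_zero ℂ a d, by rw [map_zero, hzero hp h0]⟩
    | succ k ih =>
      intro p hp hmd
      have hr : (φ p - p).IsWeightedHomogeneous a d :=
        (weightedHomogeneousSubmodule ℂ a d).sub_mem (hφ.map_isWH hp) hp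
      have hrmd : MinDeg (d + 1 - k) (φ p - p) := (hshift hmd).mono (by omega)
      obtain ⟨f', hf', hφf'⟩ := ih (φ p - p) hr hrmd
      refine ⟨p - f', (weightedHomogeneousSubmodule ℂ a d).sub_mem hp hf', ?_⟩
      rw [map_sub, hφf']
      ring
  -- φ commutes with weighted homogeneous components
  have hcomm : ∀ (e : ℕ) (f : Rn),
      weightedHomogeneousComponent a e (φ f) = φ (weightedHomogeneousComponent a e f) := by
    intro e f
    conv_lhs => rw [f.as_sum]
    conv_rhs => rw [f.as_sum]
    rw [map_sum, map_sum, map_sum, map_sum]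
    apply Finset.sum_congr rfl
    intro m _
    have hm1 : (monomial m (coeff m f) : Rn).IsWeightedHomogeneous a (Finsupp.weight a m) :=
      isWeightedHomogeneous_monomial a m _ rfl
    have hm2 := hφ.map_isWH hm1
    by_cases he : e = Finsupp.weight a m
    · subst he
      rw [hm2.weightedHomogeneousComponent_same, hm1.weightedHomogeneousComponent_same]
    · rw [hm2.weightedHomogeneousComponent_ne e he, hm1.weightedHomogeneousComponent_ne e he,
        map_zero]
  -- backwards gradedness
  have hback : ∀ (d : ℕ) (f : Rn), (φ f).IsWeightedHomogeneous a d →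
      f.IsWeightedHomogeneous a d := by
    intro d f hf
    have hz : ∀ e, e ≠ d → weightedHomogeneousComponent a e f = 0 := by
      intro e he
      apply hinjH e _ (weightedHomogeneousComponent_isWeightedHomogeneous e f)
      rw [← hcomm]
      exact hf.weightedHomogeneousComponent_ne e he
    have hfd : f = weightedHomogeneousComponent a d f := by
      conv_lhs => rw [← sum_weightedHomogeneousComponent (w := a) f]
      exact finsum_eq_single _ d hz
    rw [hfd]
    exact weightedHomogeneousComponent_isWeightedHomogeneous d f
  -- injectivity
  have hinj : Function.Injective φ := by
    intro f g hfg
    rw [← sub_eq_zero]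
    have h0 : φ (f - g) = 0 := by rw [map_sub, hfg, sub_self]
    have h1 : (f - g).IsWeightedHomogeneous a 0 :=
      hback 0 _ (by rw [h0]; exact isWeightedHomogeneous_zero ℂ a 0)
    have h2 : (f - g).IsWeightedHomogeneous a 1 :=
      hback 1 _ (by rw [h0]; exact isWeightedHomogeneous_zero ℂ a 1)
    by_contra hne
    exact absurd (h1.inj_right hne h2) (by omega)
  -- surjectivity
  have hsurj : Function.Surjective φ := by
    intro p
    have hfin := weightedHomogeneousComponent_finsupp (w := a) p
    have hp : p = ∑ e ∈ hfin.toFinset, weightedHomogeneousComponent a e p := by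
      conv_lhs => rw [← sum_weightedHomogeneousComponent (w := a) p]
      exact finsum_eq_sum _ hfin
    choose F hF1 hF2 using fun e => hsurjH e (weightedHomogeneousComponent a e p)
      (weightedHomogeneousComponent_isWeightedHomogeneous e p)
    refine ⟨∑ e ∈ hfin.toFinset, F e, ?_⟩
    rw [map_sum]
    rw [Finset.sum_congr rfl fun e _ => hF2 e]
    exact hp.symm
  exact ⟨⟨hinj, hsurj⟩, fun d f => ⟨fun h => hφ.map_isWH h, fun h => hback d f h⟩⟩

end NoMixAux

/-- Any finite group of graded automorphisms can be conjugated (by a graded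
automorphism) so as not to mix variables of different weights: each variable `x_i` is sent
into the linear span of the variables `x_j` with `a j = a i`. -/
theorem finite_group_no_mixing {n : ℕ} (a : Fin (n + 2) → ℕ) (ha : ∀ i, 0 < a i)
    (G : Subgroup (MvPolynomial (Fin (n + 2)) ℂ ≃ₐ[ℂ] MvPolynomial (Fin (n + 2)) ℂ))
    (hG : ∀ g ∈ G, IsGradedAut a g) (hfin : Finite G) :
    ∃ γ : MvPolynomial (Fin (n + 2)) ℂ ≃ₐ[ℂ] MvPolynomial (Fin (n + 2)) ℂ,
      IsGradedAut a γ ∧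
      ∀ g ∈ G, ∀ i : Fin (n + 2),
        (γ * g * γ⁻¹) (X i) ∈
          Submodule.span ℂ ((fun j : Fin (n + 2) => (X j : MvPolynomial (Fin (n + 2)) ℂ)) ''
            {j | a j = a i}) := by
  classical
  letI : Fintype ↥G := Fintype.ofFinite ↥G
  let Φ : G → (MvPolynomial (Fin (n + 2)) ℂ →ₐ[ℂ] MvPolynomial (Fin (n + 2)) ℂ) :=
    fun g => (g.1 : MvPolynomial (Fin (n + 2)) ℂ ≃ₐ[ℂ] MvPolynomial (Fin (n + 2)) ℂ).toAlgHom
  have hΦ : ∀ g : G, NoMixAux.IsGradedHom a (Φ g) :=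
    fun g i => (hG g.1 g.2 (a i) (X i)).mp (isWeightedHomogeneous_X ℂ a i)
  let M : G → Fin (n + 2) → Fin (n + 2) → ℂ :=
    fun g i j => MvPolynomial.coeff (Finsupp.single j 1) (Φ g (X i))
  have hcard : (Fintype.card G : ℂ) ≠ 0 := Nat.cast_ne_zero.mpr Fintype.card_ne_zero
  let κ : ℂ := (Fintype.card G : ℂ)⁻¹
  let c : Fin (n + 2) → MvPolynomial (Fin (n + 2)) ℂ :=
    fun i => κ • ∑ h : G, ∑ j, M h⁻¹ i j • (Φ h (X j))
  have hK1 : ∀ (g h : G) (i j : Fin (n + 2)),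
      MvPolynomial.coeff (Finsupp.single j 1) (Φ g (Φ h (X i))) =
        ∑ l, M h i l * M g l j :=
    fun g h i j => NoMixAux.coeff_single_comp ha (hΦ g) (hΦ h) i j
  have hid : ∀ (g : G) (i j : Fin (n + 2)),
      (∑ l, M g⁻¹ i l * M g l j) = if i = j then 1 else 0 := by
    intro g i j
    rw [← hK1 g g⁻¹ i j]
    have h1 : Φ g (Φ g⁻¹ (X i)) = X i := g.1.apply_symm_apply (X i)
    rw [h1, coeff_X']
    by_cases h : i = j
    · subst h; simp
    · rw [if_neg (fun hh => h ((Finsupp.single_left_inj one_ne_zero).mp hh)), if_neg h]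
  -- coefficients of c
  have hc0 : ∀ i, MvPolynomial.coeff 0 (c i) = 0 := by
    intro i
    show MvPolynomial.coeff 0 (κ • ∑ h : G, ∑ j, M h⁻¹ i j • (Φ h (X j))) = 0
    rw [MvPolynomial.coeff_smul, MvPolynomial.coeff_sum]
    rw [Finset.sum_eq_zero, smul_zero]
    intro h _
    rw [MvPolynomial.coeff_sum]
    apply Finset.sum_eq_zero
    intro j _
    rw [MvPolynomial.coeff_smul, (hΦ h).coeff_zero ha j, smul_zero]
  have hc1 : ∀ i l, MvPolynomial.coeff (Finsupp.single l 1) (c i) =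
      if i = l then 1 else 0 := by
    intro i l
    show MvPolynomial.coeff (Finsupp.single l 1)
      (κ • ∑ h : G, ∑ j, M h⁻¹ i j • (Φ h (X j))) = _
    rw [MvPolynomial.coeff_smul, MvPolynomial.coeff_sum]
    have hterm : ∀ h : G, MvPolynomial.coeff (Finsupp.single l 1)
        (∑ j, M h⁻¹ i j • (Φ h (X j))) = if i = l then 1 else 0 := by
      intro h
      rw [MvPolynomial.coeff_sum]
      have : (∑ j, MvPolynomial.coeff (Finsupp.single l 1) (M h⁻¹ i j • (Φ h (X j)))) =
          ∑ j, M h⁻¹ i j * M h j l := by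
        apply Finset.sum_congr rfl
        intro j _
        rw [MvPolynomial.coeff_smul, smul_eq_mul]
      rw [this]
      exact hid h i l
    rw [Finset.sum_congr rfl fun h _ => hterm h, Finset.sum_const, Finset.card_univ,
      nsmul_eq_mul, smul_eq_mul, ← mul_assoc, inv_mul_cancel₀ hcard, one_mul]
  have hWH : ∀ i, (c i).IsWeightedHomogeneous a (a i) := by
    intro i
    rw [← mem_weightedHomogeneousSubmodule]
    apply Submodule.smul_mem
    apply Submodule.sum_mem
    intro h _
    apply Submodule.sum_mem
    intro j _
    by_cases hj : a j = a i
    · apply Submodule.smul_mem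
      rw [mem_weightedHomogeneousSubmodule]
      exact hj ▸ hΦ h j
    · rw [show M h⁻¹ i j = 0 from (hΦ h⁻¹).lin_eq_zero hj, zero_smul]
      exact Submodule.zero_mem _
  have hMD : ∀ i, NoMixAux.MinDeg 2 (c i - X i) := by
    intro i
    apply NoMixAux.minDeg_two
    · rw [coeff_sub, hc0 i, coeff_zero_X, sub_zero]
    · intro j
      rw [coeff_sub, hc1 i j, coeff_X']
      by_cases h : i = j
      · subst h; simp
      · rw [if_neg h, if_neg (fun hh => h ((Finsupp.single_left_inj one_ne_zero).mp hh)),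
          sub_zero]
  obtain ⟨hbij, hgr⟩ := NoMixAux.aeval_bijective_graded ha c hWH hMD
  set Γ := AlgEquiv.ofBijective
    (aeval c : MvPolynomial (Fin (n + 2)) ℂ →ₐ[ℂ] MvPolynomial (Fin (n + 2)) ℂ) hbij with hΓdef
  have hΓgraded : IsGradedAut a Γ := fun d f => hgr d f
  refine ⟨Γ⁻¹, hΓgraded.inv, ?_⟩
  intro g hg i
  rw [inv_inv]
  set gG : G := ⟨g, hg⟩ with hgGdef
  have hK3 : g (c i) = ∑ l, M gG i l • c l := by
    have e1 : g (c i) = κ • ∑ h : G, ∑ j, M h⁻¹ i j • (Φ (gG * h) (X j)) := by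
      show g (κ • ∑ h : G, ∑ j, M h⁻¹ i j • (Φ h (X j))) = _
      rw [map_smul, map_sum]
      congr 1
      apply Finset.sum_congr rfl
      intro h _
      rw [map_sum]
      apply Finset.sum_congr rfl
      intro j _
      rw [map_smul]
      rfl
    have e2 : (∑ h : G, ∑ j, M h⁻¹ i j • (Φ (gG * h) (X j))) =
        ∑ k : G, ∑ j, M (k⁻¹ * gG) i j • (Φ k (X j)) := by
      apply Fintype.sum_equiv (Equiv.mulLeft gG)
      intro h
      simp only [Equiv.coe_mulLeft]
      rw [show (gG * h)⁻¹ * gG = h⁻¹ by group]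
    have e3 : ∀ (k : G) (j : Fin (n + 2)), M (k⁻¹ * gG) i j = ∑ l, M gG i l * M k⁻¹ l j :=
      fun k j => hK1 k⁻¹ gG i j
    calc g (c i) = ∑ k : G, ∑ j, ∑ l, (κ * (M gG i l * M k⁻¹ l j)) • (Φ k (X j)) := by
          rw [e1, e2, Finset.smul_sum]
          apply Finset.sum_congr rfl; intro k _
          rw [Finset.smul_sum]
          apply Finset.sum_congr rfl; intro j _
          rw [e3 k j, Finset.sum_smul, Finset.smul_sum]
          apply Finset.sum_congr rfl; intro l _
          rw [smul_smul]
      _ = ∑ k : G, ∑ l, ∑ j, (κ * (M gG i l * M k⁻¹ l j)) • (Φ k (X j)) :=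
          Finset.sum_congr rfl fun k _ => Finset.sum_comm
      _ = ∑ l, ∑ k : G, ∑ j, (κ * (M gG i l * M k⁻¹ l j)) • (Φ k (X j)) := Finset.sum_comm
      _ = ∑ l, M gG i l • c l := by
          apply Finset.sum_congr rfl; intro l _
          show _ = M gG i l • (κ • ∑ k : G, ∑ j, M k⁻¹ l j • (Φ k (X j)))
          rw [smul_smul, Finset.smul_sum]
          apply Finset.sum_congr rfl; intro k _
          rw [Finset.smul_sum]
          apply Finset.sum_congr rfl; intro j _
          rw [smul_smul]
          congr 1
          ring
  have hΓX : ∀ l, Γ (X l) = c l := fun l => aeval_X c l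
  have happ : (Γ⁻¹ * g * Γ) (X i) =
      ∑ l, M gG i l • (X l : MvPolynomial (Fin (n + 2)) ℂ) := by
    show Γ.symm (g (Γ (X i))) = _
    rw [hΓX i, hK3, map_sum]
    apply Finset.sum_congr rfl
    intro l _
    rw [map_smul, ← hΓX l, Γ.symm_apply_apply]
  rw [happ]
  apply Submodule.sum_mem
  intro l _
  by_cases hal : a l = a i
  · exact Submodule.smul_mem _ _ (Submodule.subset_span ⟨l, hal, rfl⟩)
  · rw [show M gG i l = 0 from (hΦ gG).lin_eq_zero hal, zero_smul]
    exact Submodule.zero_mem _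

end
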